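/- In the setting U = U(n,ℂ), for ξ, η Hermitian matrices in i𝔲(n,ℂ) identified via the trace form B(X,Y) = tr(iX·iY) on 𝔲(n,ℂ), let β(t) = exp(−itξ)·exp(2iη)·exp(−itξ) (matrix exponentials). Then for ξ, η in a neighborhood of 0 where log β(t) is defined by the power series, (d/dt)|_{t=0} [ −(1/8) tr( (log β(t))² ) ] = B(ξ,η). Equivalently, the moment map of the right U-action on U^ℂ associated with ρ(u exp(iη)) = (1/2)B(η,η) satisfies μ^ξ(u·exp(iη)) = B(ξ,η). -/

import Mathlib

open NormedSpace Filter
open scoped Nat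

namespace Stmt12Aux

variable {n : ℕ}

local notation "Mx" => Matrix (Fin n) (Fin n) ℂ

noncomputable abbrev mxNR : NormedRing Mx :=
  { Matrix.linftyOpNormedRing with
    toMetricSpace := (Matrix.linftyOpNormedRing (α := ℂ) (n := Fin n)).toMetricSpace.replaceUniformity
      (U := Matrix.instUniformSpace (Fin n) (Fin n) ℂ) rfl }

attribute [local instance] mxNR

noncomputable abbrev mxNA : NormedAlgebra ℂ Mx :=
  { Matrix.instAlgebra with
    norm_smul_le := fun r x =>
      (Matrix.linftyOpNormedAlgebra (R := ℂ) (α := ℂ) (n := Fin n)).norm_smul_le r x }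

attribute [local instance] mxNA

/-- trace (P * ·) as a continuous linear map. -/
noncomputable def T (P : Mx) : Mx →L[ℂ] ℂ :=
  LinearMap.toContinuousLinearMap
    ((Matrix.traceLinearMap (Fin n) ℂ ℂ).comp (LinearMap.mulLeft ℂ P))

lemma T_apply (P X : Mx) : T P X = Matrix.trace (P * X) := rfl

lemma clm_comp_hasDerivAt {f : ℝ → Mx} {f' : Mx} {x : ℝ} (T : Mx →L[ℂ] ℂ)
    (hf : HasDerivAt f f' x) : HasDerivAt (fun t => T (f t)) (T f') x := by
  exact (T.hasFDerivAt.restrictScalars ℝ).comp_hasDerivAt x hf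

lemma hasDerivAt_line (A D : Mx) (s : ℝ) : HasDerivAt (fun s : ℝ => A + s • D) D s := by
  simpa using ((hasDerivAt_id s).smul_const D).const_add A

lemma hasDerivAt_line_pow (A D : Mx) (k : ℕ) (s : ℝ) :
    HasDerivAt (fun s : ℝ => (A + s • D) ^ k)
      (∑ j ∈ Finset.range k, (A + s • D) ^ j * D * (A + s • D) ^ (k - 1 - j)) s := by
  induction k with
  | zero => simpa using hasDerivAt_const s (1 : Mx)
  | succ k ih =>
    have h := ih.fun_mul (hasDerivAt_line A D s)
    have hfun : (fun s : ℝ => (A + s • D) ^ k * (A + s • D)) =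
        fun s : ℝ => (A + s • D) ^ (k + 1) := by
      funext t; rw [← pow_succ]
    rw [hfun] at h
    refine h.congr_deriv ?_
    symm
    rw [Finset.sum_range_succ, Finset.sum_mul]
    have h1 : ∀ j ∈ Finset.range k,
        (A + s • D) ^ j * D * (A + s • D) ^ (k + 1 - 1 - j) =
        (A + s • D) ^ j * D * (A + s • D) ^ (k - 1 - j) * (A + s • D) := by
      intro j hj
      rw [Finset.mem_range] at hj
      rw [mul_assoc ((A + s • D) ^ j * D), ← pow_succ]
      congr 2
      omega
    rw [Finset.sum_congr rfl h1]
    have : k + 1 - 1 - k = 0 := by omega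
    rw [this, pow_zero, mul_one]

lemma trace_comm_pow (P A D : Mx) (hPA : P * A = A * P) {k j : ℕ} (hj : j < k) :
    Matrix.trace (P * ((A ^ j) * D * (A ^ (k - 1 - j)))) =
      Matrix.trace (P * (A ^ (k - 1) * D)) := by
  have hPA' : Commute P A := hPA
  have hc : ∀ m : ℕ, P * A ^ m = A ^ m * P := fun m => (hPA'.pow_right m).eq
  have h1 : P * (A ^ j * D * A ^ (k - 1 - j)) = P * A ^ j * D * A ^ (k - 1 - j) := by
    simp [mul_assoc]
  rw [h1, Matrix.trace_mul_comm]
  have h2 : A ^ (k - 1 - j) * (P * A ^ j * D) = P * (A ^ (k - 1) * D) := by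
    rw [← mul_assoc, ← mul_assoc, ← hc (k - 1 - j), mul_assoc P, ← pow_add,
      (by omega : k - 1 - j + j = k - 1), mul_assoc]
  rw [h2]

lemma key (P A D : Mx) (hPA : P * A = A * P) :
    HasDerivAt (fun s : ℝ => Matrix.trace (P * exp (A + s • D)))
      (Matrix.trace (P * (exp A * D))) 0 := by
  classical
  set Tp := T P with hTp
  -- the summands and their derivatives
  set f : ℕ → ℝ → ℂ := fun k s => (k ! : ℂ)⁻¹ • Tp ((A + s • D) ^ k) with hf
  set f' : ℕ → ℝ → ℂ := fun k s => (k ! : ℂ)⁻¹ •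
      Tp (∑ j ∈ Finset.range k, (A + s • D) ^ j * D * (A + s • D) ^ (k - 1 - j)) with hf'
  have hderiv : ∀ k (s : ℝ), HasDerivAt (f k) (f' k s) s := fun k s =>
    (clm_comp_hasDerivAt Tp (hasDerivAt_line_pow A D k s)).fun_const_smul _
  -- bounds
  set R₀ : ℝ := ‖A‖ + ‖D‖ with hR₀
  have hR₀0 : 0 ≤ R₀ := by positivity
  set c1 : ℝ := max 1 ‖(1 : Mx)‖ with hc1
  have hc11 : 1 ≤ c1 := le_max_left _ _
  have hpow : ∀ (X : Mx), ‖X‖ ≤ R₀ → ∀ m : ℕ, ‖X ^ m‖ ≤ c1 * R₀ ^ m := by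
    intro X hX m
    cases m with
    | zero =>
      rw [pow_zero, pow_zero, mul_one]
      calc ‖(1 : Mx)‖ ≤ max 1 ‖(1 : Mx)‖ := le_max_right _ _
        _ = c1 := rfl
    | succ m =>
      calc ‖X ^ (m + 1)‖ ≤ ‖X‖ ^ (m + 1) := norm_pow_le' X (Nat.succ_pos m)
        _ ≤ R₀ ^ (m + 1) := pow_le_pow_left₀ (norm_nonneg X) hX _
        _ ≤ c1 * R₀ ^ (m + 1) := le_mul_of_one_le_left (by positivity) hc11
  set u : ℕ → ℝ := fun k => (‖Tp‖ * (c1 * c1 * ‖D‖)) * ((k : ℝ) * R₀ ^ (k - 1) * (k ! : ℝ)⁻¹)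
    with hu_def
  have hu : Summable u := by
    apply Summable.mul_left
    apply (summable_nat_add_iff 1).mp
    have : (fun k : ℕ => ((k + 1 : ℕ) : ℝ) * R₀ ^ (k + 1 - 1) * ((k+1) ! : ℝ)⁻¹) =
        fun k : ℕ => R₀ ^ k / (k : ℕ)! := by
      funext k
      have hk : ((k+1) ! : ℝ) = ((k + 1 : ℕ) : ℝ) * (k ! : ℝ) := by
        push_cast [Nat.factorial_succ]; ring
      rw [Nat.add_sub_cancel, hk]
      have h1 : ((k + 1 : ℕ) : ℝ) ≠ 0 := by positivity
      have h2 : (k ! : ℝ) ≠ 0 := by positivity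
      field_simp
    rw [this]
    exact Real.summable_pow_div_factorial R₀
  have hbound : ∀ (k : ℕ) (s : ℝ), s ∈ Metric.ball (0 : ℝ) 1 → ‖f' k s‖ ≤ u k := by
    intro k s hs
    have hXle : ‖A + s • D‖ ≤ R₀ := by
      calc ‖A + s • D‖ ≤ ‖A‖ + ‖s • D‖ := norm_add_le _ _
        _ ≤ ‖A‖ + ‖D‖ := by
            rw [norm_smul]
            have : ‖s‖ ≤ 1 := by
              simpa [Real.norm_eq_abs] using (le_of_lt (by simpa [Metric.mem_ball] using hs))
            nlinarith [norm_nonneg D]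
    have hterm : ∀ j ∈ Finset.range k,
        ‖(A + s • D) ^ j * D * (A + s • D) ^ (k - 1 - j)‖ ≤ c1 * c1 * ‖D‖ * R₀ ^ (k - 1) := by
      intro j hj
      rw [Finset.mem_range] at hj
      calc ‖(A + s • D) ^ j * D * (A + s • D) ^ (k - 1 - j)‖
          ≤ ‖(A + s • D) ^ j‖ * ‖D‖ * ‖(A + s • D) ^ (k - 1 - j)‖ := by
            exact le_trans (norm_mul_le _ _)
              (mul_le_mul_of_nonneg_right (norm_mul_le _ _) (norm_nonneg _))
        _ ≤ (c1 * R₀ ^ j) * ‖D‖ * (c1 * R₀ ^ (k - 1 - j)) := by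
            apply mul_le_mul
            · exact mul_le_mul_of_nonneg_right (hpow _ hXle j) (norm_nonneg D)
            · exact hpow _ hXle _
            · exact norm_nonneg _
            · positivity
        _ = c1 * c1 * ‖D‖ * (R₀ ^ j * R₀ ^ (k - 1 - j)) := by ring
        _ = c1 * c1 * ‖D‖ * R₀ ^ (k - 1) := by
            rw [← pow_add, (by omega : j + (k - 1 - j) = k - 1)]
    have hsum_norm : ‖∑ j ∈ Finset.range k, (A + s • D) ^ j * D * (A + s • D) ^ (k - 1 - j)‖
        ≤ (k : ℝ) * (c1 * c1 * ‖D‖ * R₀ ^ (k - 1)) := by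
      calc ‖∑ j ∈ Finset.range k, (A + s • D) ^ j * D * (A + s • D) ^ (k - 1 - j)‖
          ≤ ∑ j ∈ Finset.range k, ‖(A + s • D) ^ j * D * (A + s • D) ^ (k - 1 - j)‖ :=
            norm_sum_le _ _
        _ ≤ ∑ _j ∈ Finset.range k, (c1 * c1 * ‖D‖ * R₀ ^ (k - 1)) :=
            Finset.sum_le_sum hterm
        _ = (k : ℝ) * (c1 * c1 * ‖D‖ * R₀ ^ (k - 1)) := by
            simp [Finset.sum_const, mul_comm]
    calc ‖f' k s‖ = ‖(k ! : ℂ)⁻¹‖ *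
          ‖Tp (∑ j ∈ Finset.range k, (A + s • D) ^ j * D * (A + s • D) ^ (k - 1 - j))‖ := by
          rw [hf']; exact norm_smul _ _
      _ ≤ (k ! : ℝ)⁻¹ * (‖Tp‖ *
            ‖∑ j ∈ Finset.range k, (A + s • D) ^ j * D * (A + s • D) ^ (k - 1 - j)‖) := by
          apply mul_le_mul
          · simp
          · exact Tp.le_opNorm _
          · exact norm_nonneg _
          · positivity
      _ ≤ (k ! : ℝ)⁻¹ * (‖Tp‖ * ((k : ℝ) * (c1 * c1 * ‖D‖ * R₀ ^ (k - 1)))) := by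
          apply mul_le_mul_of_nonneg_left _ (by positivity)
          exact mul_le_mul_of_nonneg_left hsum_norm Tp.opNorm_nonneg
      _ = u k := by rw [hu_def]; ring
  -- summability of f at each point, giving pointwise convergence
  have hfs : ∀ s : ℝ, HasSum (fun k => f k s) (Matrix.trace (P * exp (A + s • D))) := by
    intro s
    have h1 : HasSum (fun k : ℕ => ((k ! : ℂ)⁻¹) • (A + s • D) ^ k) (exp (A + s • D)) := by
      rw [exp_eq_tsum ℂ]
      exact (expSeries_summable' (𝕂 := ℂ) (A + s • D)).hasSum
    have h2 := h1.mapL Tp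
    have h3 : (fun k : ℕ => Tp ((k ! : ℂ)⁻¹ • (A + s • D) ^ k)) = fun k => f k s := by
      funext k; rw [hf]; simp
    rw [h3] at h2
    have h4 : Tp (exp (A + s • D)) = Matrix.trace (P * exp (A + s • D)) := T_apply _ _
    rwa [h4] at h2
  -- the derivative via uniform convergence on the unit ball
  have hmain : HasDerivAt (fun s : ℝ => Matrix.trace (P * exp (A + s • D)))
      (∑' k, f' k 0) 0 := by
    apply hasDerivAt_of_tendstoUniformlyOn (Metric.isOpen_ball)
      (tendstoUniformlyOn_tsum_nat hu hbound)
      (Filter.Eventually.of_forall fun N s _ => HasDerivAt.fun_sum fun k _ => hderiv k s)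
      (fun s _ => (hfs s).tendsto_sum_nat)
      (by simp : (0 : ℝ) ∈ Metric.ball (0 : ℝ) 1)
  -- identify the sum of derivatives at 0
  have hsummable0 : Summable fun k => f' k 0 :=
    Summable.of_norm_bounded hu fun k => hbound k 0 (by simp)
  have hshift : ∀ k : ℕ, f' (k + 1) 0 = (k ! : ℂ)⁻¹ • Matrix.trace (P * (A ^ k * D)) := by
    intro k
    have h0 : ∀ j ∈ Finset.range (k + 1),
        Matrix.trace (P * ((A + (0 : ℝ) • D) ^ j * D * (A + (0 : ℝ) • D) ^ (k + 1 - 1 - j))) =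
          Matrix.trace (P * (A ^ k * D)) := by
      intro j hj
      rw [Finset.mem_range] at hj
      have : (A + (0 : ℝ) • D) = A := by simp
      rw [this]
      simpa using trace_comm_pow P A D hPA (k := k + 1) (j := j) hj
    have hTp_sum : Tp (∑ j ∈ Finset.range (k + 1),
        (A + (0 : ℝ) • D) ^ j * D * (A + (0 : ℝ) • D) ^ (k + 1 - 1 - j)) =
        (k + 1 : ℂ) * Matrix.trace (P * (A ^ k * D)) := by
      rw [map_sum]
      have : ∀ j ∈ Finset.range (k + 1),
          Tp ((A + (0 : ℝ) • D) ^ j * D * (A + (0 : ℝ) • D) ^ (k + 1 - 1 - j)) =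
            Matrix.trace (P * (A ^ k * D)) := by
        intro j hj; rw [T_apply]; exact h0 j hj
      rw [Finset.sum_congr rfl this]
      simp [mul_comm]
    rw [hf']
    simp only [hTp_sum, smul_eq_mul]
    have hfac : ((k+1) ! : ℂ) = ((k : ℂ) + 1) * (k ! : ℂ) := by
      push_cast [Nat.factorial_succ]; ring
    have h1 : ((k : ℂ) + 1) ≠ 0 := Nat.cast_add_one_ne_zero k
    rw [hfac, mul_inv, mul_mul_mul_comm, inv_mul_cancel₀ h1, one_mul]
  have htsum : (∑' k, f' k 0) = Matrix.trace (P * (exp A * D)) := by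
    rw [Summable.tsum_eq_zero_add hsummable0]
    have hzero : f' 0 0 = 0 := by rw [hf']; simp
    rw [hzero, zero_add]
    -- build the CLM X ↦ trace (P * (X * D))
    have hQ : HasSum (fun k : ℕ => (k ! : ℂ)⁻¹ • Matrix.trace (P * (A ^ k * D)))
        (Matrix.trace (P * (exp A * D))) := by
      set Q : Mx →L[ℂ] ℂ := LinearMap.toContinuousLinearMap
        (((Matrix.traceLinearMap (Fin n) ℂ ℂ).comp (LinearMap.mulLeft ℂ P)).comp
          (LinearMap.mulRight ℂ D)) with hQdef
      have hQ_apply : ∀ X : Mx, Q X = Matrix.trace (P * (X * D)) := fun X => rfl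
      have h1 : HasSum (fun k : ℕ => ((k ! : ℂ)⁻¹) • A ^ k) (exp A) := by
        rw [exp_eq_tsum ℂ]
        exact (expSeries_summable' (𝕂 := ℂ) A).hasSum
      have h2 := h1.mapL Q
      have h3 : (fun k : ℕ => Q ((k ! : ℂ)⁻¹ • A ^ k)) =
          fun k : ℕ => (k ! : ℂ)⁻¹ • Matrix.trace (P * (A ^ k * D)) := by
        funext k; rw [map_smul, hQ_apply]
      rw [h3] at h2
      rwa [hQ_apply] at h2
    rw [(funext hshift : (fun k => f' (k + 1) 0) = _)]
    exact hQ.tsum_eq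
  rw [htsum] at hmain
  exact hmain

lemma key' (P A D : Mx) (hPA : P * A = A * P) (L : ℝ → Mx)
    (hld : HasDerivAt L D 0) (hL0 : L 0 = A) :
    HasDerivAt (fun t : ℝ => Matrix.trace (P * exp (L t)))
      (Matrix.trace (P * (exp A * D))) 0 := by
  have hexp : AnalyticAt ℂ (exp) A :=
    analyticAt_exp_of_mem_ball (𝕂 := ℂ) A (by
      rw [expSeries_radius_eq_top]; exact edist_lt_top _ _)
  have hdiff : DifferentiableAt ℝ (exp) A :=
    (hexp.differentiableAt).restrictScalars ℝ
  have hfd : HasFDerivAt (exp) (fderiv ℝ (exp) A) A := hdiff.hasFDerivAt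
  -- derivative along the straight line
  have hline := hasDerivAt_line A D 0
  have h1 : HasDerivAt (fun s : ℝ => exp (A + s • D)) (fderiv ℝ (exp) A D) 0 := by
    have hfd' : HasFDerivAt (exp) (fderiv ℝ (exp) A) (A + (0 : ℝ) • D) := by
      rw [show A + (0 : ℝ) • D = A by simp]; exact hfd
    simpa [Function.comp_def] using hfd'.comp_hasDerivAt (0 : ℝ) hline
  have h2 : HasDerivAt (fun s : ℝ => Matrix.trace (P * exp (A + s • D)))
      (T P (fderiv ℝ (exp) A D)) 0 := by
    have := clm_comp_hasDerivAt (T P) h1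
    simpa only [T_apply] using this
  have hEq : T P (fderiv ℝ (exp) A D) = Matrix.trace (P * (exp A * D)) :=
    h2.unique (key P A D hPA)
  -- derivative along L
  have h3 : HasDerivAt (fun t : ℝ => exp (L t)) (fderiv ℝ (exp) A D) 0 := by
    have hfd' : HasFDerivAt (exp) (fderiv ℝ (exp) A) (L 0) := by
      rw [hL0]; exact hfd
    simpa [Function.comp_def] using hfd'.comp_hasDerivAt (0 : ℝ) hld
  have h4 := clm_comp_hasDerivAt (T P) h3
  rw [hEq] at h4
  simpa only [T_apply] using h4

end Stmt12Aux

attribute [local instance] Stmt12Aux.mxNR Stmt12Aux.mxNA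

open Stmt12Aux

/-- For `ξ, η ∈ 𝔲(n)` (skew-Hermitian), let
`β(t) = exp(−itξ)·exp(2iη)·exp(−itξ)` and let `L(t) = log β(t)` be given by the power
series near `0` (encoded: `exp(L t) = β t` near `0` and `L 0 = 2iη`, `L` smooth).
Then `(d/dt)|₀ [−(1/8) tr((log β t)²)] = B(ξ,η) = tr(iξ·iη)`, i.e. the moment map of
the right `U(n)`-action associated with `ρ(u exp(iη)) = ½B(η,η)` satisfies
`μ^ξ(u·exp(iη)) = B(ξ,η)`. -/
theorem stmt12
    (n : ℕ) (ξ η : Matrix (Fin n) (Fin n) ℂ)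
    (hξ : ξ.conjTranspose = -ξ) (hη : η.conjTranspose = -η)
    (β : ℝ → Matrix (Fin n) (Fin n) ℂ)
    (hβ : ∀ t : ℝ, β t =
      NormedSpace.exp ((-(t : ℂ) * Complex.I) • ξ) *
        NormedSpace.exp (((2 : ℂ) * Complex.I) • η) *
        NormedSpace.exp ((-(t : ℂ) * Complex.I) • ξ))
    (L : ℝ → Matrix (Fin n) (Fin n) ℂ)
    (hL : ∀ᶠ t in nhds (0 : ℝ), NormedSpace.exp (L t) = β t)
    (hL0 : L 0 = ((2 : ℂ) * Complex.I) • η)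
    (hLsmooth : ∀ i j : Fin n, ContDiffAt ℝ ⊤ (fun t : ℝ => L t i j) 0) :
    HasDerivAt (fun t : ℝ => (-(1 : ℂ) / 8) * Matrix.trace (L t * L t))
      (Matrix.trace ((Complex.I • ξ) * (Complex.I • η))) 0 := by
  classical
  set A : Matrix (Fin n) (Fin n) ℂ := ((2 : ℂ) * Complex.I) • η with hA
  set m : Matrix (Fin n) (Fin n) ℂ := (-Complex.I) • ξ with hm
  set D : Matrix (Fin n) (Fin n) ℂ :=
    ∑ i, ∑ j, Matrix.single i j (deriv (fun t : ℝ => L t i j) 0) with hD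
  -- the derivative of L at 0
  have hld : HasDerivAt L D 0 := by
    have h1 : ∀ i j : Fin n, HasDerivAt (fun t : ℝ => L t i j)
        (deriv (fun t : ℝ => L t i j) 0) 0 :=
      fun i j => ((hLsmooth i j).differentiableAt (by simp)).hasDerivAt
    have h3 : ∀ (i j : Fin n) (c : ℂ),
        Matrix.single i j c = c • Matrix.single i j (1 : ℂ) := by
      intro i j c; rw [Matrix.smul_single, smul_eq_mul, mul_one]
    have h2 : HasDerivAt (fun t : ℝ => ∑ i, ∑ j, Matrix.single i j (L t i j)) D 0 := by
      rw [hD]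
      refine HasDerivAt.fun_sum fun i _ => HasDerivAt.fun_sum fun j _ => ?_
      have h5 := (h1 i j).smul_const (Matrix.single i j (1 : ℂ))
      simp only [← h3] at h5
      exact h5
    have h4 : (fun t : ℝ => ∑ i, ∑ j, Matrix.single i j (L t i j)) = L := by
      funext t; exact (Matrix.matrix_eq_sum_single (L t)).symm
    rwa [h4] at h2
  -- commutation facts
  have hηA : η * A = A * η := by rw [hA, Matrix.mul_smul, Matrix.smul_mul]
  have hcAη : Commute A η := by
    show A * η = η * A
    exact hηA.symm
  set P : Matrix (Fin n) (Fin n) ℂ := η * NormedSpace.exp (-A) with hP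
  have hPA : P * A = A * P := by
    have h1 : Commute (NormedSpace.exp (-A)) A := ((Commute.refl A).neg_left).exp_left
    calc (η * NormedSpace.exp (-A)) * A = η * (NormedSpace.exp (-A) * A) := by
          rw [mul_assoc]
      _ = η * (A * NormedSpace.exp (-A)) := by rw [h1.eq]
      _ = (η * A) * NormedSpace.exp (-A) := by rw [mul_assoc]
      _ = (A * η) * NormedSpace.exp (-A) := by rw [hηA]
      _ = A * (η * NormedSpace.exp (-A)) := by rw [mul_assoc]
  have hkey := key' P A D hPA L hld hL0
  -- inverse relations
  have hinv1 : NormedSpace.exp (-A) * NormedSpace.exp A = 1 := by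
    rw [← Matrix.exp_add_of_commute _ _ ((Commute.refl A).neg_left)]
    simp
  have hinv2 : NormedSpace.exp A * NormedSpace.exp (-A) = 1 := by
    rw [← Matrix.exp_add_of_commute _ _ ((Commute.refl A).neg_right)]
    simp
  -- rewrite β in terms of exp (t • m)
  have hsmul : ∀ t : ℝ, (-(t : ℂ) * Complex.I) • ξ = t • m := by
    intro t
    calc (-(t : ℂ) * Complex.I) • ξ = ((t : ℝ) • (-Complex.I)) • ξ := by
          congr 1
          rw [Complex.real_smul]; ring
      _ = (t : ℝ) • ((-Complex.I) • ξ) := smul_assoc _ _ _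
      _ = t • m := by rw [hm]
  have hβ' : (fun t : ℝ => NormedSpace.exp (t • m) * NormedSpace.exp A *
      NormedSpace.exp (t • m)) = β := by
    funext t; rw [hβ t, hsmul t]
  -- derivative of β at 0
  have he : HasDerivAt (fun t : ℝ => NormedSpace.exp ((t : ℝ) • m)) m 0 := by
    have hp : HasDerivAt (fun t : ℝ => (t : ℝ) • m) m 0 := by
      simpa using (hasDerivAt_id (0 : ℝ)).smul_const m
    have h0 : HasFDerivAt (NormedSpace.exp)
        ((1 : Matrix (Fin n) (Fin n) ℂ →L[ℂ] Matrix (Fin n) (Fin n) ℂ).restrictScalars ℝ)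
        ((0 : ℝ) • m) := by
      rw [zero_smul]
      exact (hasFDerivAt_exp_zero (𝕂 := ℂ)
        (𝔸 := Matrix (Fin n) (Fin n) ℂ)).restrictScalars ℝ
    simpa [Function.comp_def] using h0.comp_hasDerivAt (0 : ℝ) hp
  have hβd : HasDerivAt β (m * NormedSpace.exp A + NormedSpace.exp A * m) 0 := by
    have h1 := (he.mul_const (NormedSpace.exp A)).fun_mul he
    rw [hβ'] at h1
    simpa [NormedSpace.exp_zero] using h1
  have hβT : HasDerivAt (fun t : ℝ => Matrix.trace (P * β t))
      (Matrix.trace (P * (m * NormedSpace.exp A + NormedSpace.exp A * m))) 0 := by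
    simpa only [T_apply] using clm_comp_hasDerivAt (T P) hβd
  have hcong : (fun t : ℝ => Matrix.trace (P * NormedSpace.exp (L t))) =ᶠ[nhds (0 : ℝ)]
      (fun t : ℝ => Matrix.trace (P * β t)) := by
    filter_upwards [hL] with t ht
    rw [ht]
  have hkey2 : HasDerivAt (fun t : ℝ => Matrix.trace (P * NormedSpace.exp (L t)))
      (Matrix.trace (P * (m * NormedSpace.exp A + NormedSpace.exp A * m))) 0 :=
    hβT.congr_of_eventuallyEq hcong
  have huniq : Matrix.trace (P * (NormedSpace.exp A * D)) =
      Matrix.trace (P * (m * NormedSpace.exp A + NormedSpace.exp A * m)) :=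
    hkey.unique hkey2
  -- simplify both sides of huniq
  have hls : P * (NormedSpace.exp A * D) = η * D := by
    calc (η * NormedSpace.exp (-A)) * (NormedSpace.exp A * D)
        = η * ((NormedSpace.exp (-A) * NormedSpace.exp A) * D) := by
          simp only [mul_assoc]
      _ = η * D := by rw [hinv1, one_mul]
  have hCη : NormedSpace.exp A * η = η * NormedSpace.exp A := (hcAη.exp_left).eq
  have hrs : Matrix.trace (P * (m * NormedSpace.exp A + NormedSpace.exp A * m)) =
      2 * Matrix.trace (η * m) := by
    rw [mul_add, Matrix.trace_add]
    have t2 : P * (NormedSpace.exp A * m) = η * m := by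
      calc (η * NormedSpace.exp (-A)) * (NormedSpace.exp A * m)
          = η * ((NormedSpace.exp (-A) * NormedSpace.exp A) * m) := by
            simp only [mul_assoc]
        _ = η * m := by rw [hinv1, one_mul]
    have t1 : Matrix.trace (P * (m * NormedSpace.exp A)) = Matrix.trace (η * m) := by
      have e1 : P * (m * NormedSpace.exp A) = (P * m) * NormedSpace.exp A := by
        simp only [mul_assoc]
      rw [e1, Matrix.trace_mul_comm]
      have e2 : NormedSpace.exp A * (P * m) = η * m := by
        calc NormedSpace.exp A * ((η * NormedSpace.exp (-A)) * m)
            = (NormedSpace.exp A * η) * (NormedSpace.exp (-A) * m) := by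
              simp only [mul_assoc]
          _ = (η * NormedSpace.exp A) * (NormedSpace.exp (-A) * m) := by rw [hCη]
          _ = η * ((NormedSpace.exp A * NormedSpace.exp (-A)) * m) := by
              simp only [mul_assoc]
          _ = η * m := by rw [hinv2, one_mul]
      rw [e2]
    rw [t1, t2]; ring
  have hηD : Matrix.trace (η * D) = 2 * Matrix.trace (η * m) := by
    calc Matrix.trace (η * D) = Matrix.trace (P * (NormedSpace.exp A * D)) := by rw [hls]
      _ = _ := huniq
      _ = 2 * Matrix.trace (η * m) := hrs
  -- final computation
  have h7 : HasDerivAt (fun t : ℝ => L t * L t) (D * A + A * D) 0 := by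
    have := hld.fun_mul hld
    rwa [hL0] at this
  have h8 : HasDerivAt (fun t : ℝ => Matrix.trace (L t * L t))
      (Matrix.trace (D * A + A * D)) 0 := by
    have := clm_comp_hasDerivAt (T 1) h7
    simpa only [T_apply, one_mul] using this
  have h9 := h8.const_mul (-(1 : ℂ) / 8)
  have hfinal : (-(1 : ℂ) / 8) * Matrix.trace (D * A + A * D) =
      Matrix.trace ((Complex.I • ξ) * (Complex.I • η)) := by
    have h10 : Matrix.trace (D * A) = Matrix.trace (A * D) := Matrix.trace_mul_comm _ _
    rw [Matrix.trace_add, h10]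
    have h11 : Matrix.trace (A * D) = (2 * Complex.I) * Matrix.trace (η * D) := by
      rw [hA, Matrix.smul_mul, Matrix.trace_smul, smul_eq_mul]
    have h12 : Matrix.trace (η * m) = (-Complex.I) * Matrix.trace (η * ξ) := by
      rw [hm, Matrix.mul_smul, Matrix.trace_smul, smul_eq_mul]
    have h13 : Matrix.trace ((Complex.I • ξ) * (Complex.I • η)) =
        (Complex.I * Complex.I) * Matrix.trace (ξ * η) := by
      rw [Matrix.smul_mul, Matrix.mul_smul, Matrix.trace_smul, Matrix.trace_smul,
        smul_eq_mul, smul_eq_mul]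
      ring
    rw [h11, hηD, h12, h13, Matrix.trace_mul_comm ξ η]
    ring
  rw [hfinal] at h9
  exact h9
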